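/- For every X₀ ∈ V and r > 0, and for all X, Y ∈ V with ‖X − X₀‖ ≤ r and ‖Y − X₀‖ ≤ r, one has d_Gram(X,Y)² ≤ 2(‖X₀‖ + r)·d_H(X,Y); equivalently, ‖XᵀX − YᵀY‖ ≤ 2(‖X₀‖ + r)·min_{Q∈H} ‖X − Q·Y‖. -/

import Mathlib

open scoped BigOperators
open Matrix

namespace GPR

variable {L : ℕ} {N R : Fin L → ℕ}

/-- The signal space: `L`-tuples of real `N ℓ × R ℓ` matrices. -/
abbrev V (N R : Fin L → ℕ) := ∀ ℓ : Fin L, Matrix (Fin (N ℓ)) (Fin (R ℓ)) ℝ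

/-- Frobenius norm of a tuple of matrices: `(Σ_ℓ Σ_{i,j} (X_ℓ)_{ij}²)^{1/2}`. -/
noncomputable def fnorm {m n : Fin L → ℕ} (X : ∀ ℓ : Fin L, Matrix (Fin (m ℓ)) (Fin (n ℓ)) ℝ) : ℝ :=
  Real.sqrt (∑ ℓ, ∑ i, ∑ j, (X ℓ i j) ^ 2)

/-- The group `H = ∏_ℓ O(N ℓ)`, as tuples of orthogonal matrices. -/
abbrev HGroup (N : Fin L → ℕ) := ∀ ℓ : Fin L, Matrix.orthogonalGroup (Fin (N ℓ)) ℝ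

/-- The action of `H` on `V`: `(Q · X)_ℓ = Q_ℓ X_ℓ`. -/
def act (Q : HGroup N) (X : V N R) : V N R :=
  fun ℓ => (Q ℓ : Matrix (Fin (N ℓ)) (Fin (N ℓ)) ℝ) * X ℓ

/-- `d_σ(X,Y) = min(‖X−Y‖, ‖X+Y‖)`. -/
noncomputable def dSigma (X Y : V N R) : ℝ := min (fnorm (X - Y)) (fnorm (X + Y))

/-- `d_H(X,Y) = min_{Q ∈ H} ‖X − Q·Y‖`. -/
noncomputable def dH (X Y : V N R) : ℝ := ⨅ Q : HGroup N, fnorm (X - act Q Y)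

/-- The positive semidefinite square root `√(XᵀX)` of the Gram matrix of a single matrix. -/
noncomputable def gramSqrt {n d : ℕ} (X : Matrix (Fin n) (Fin d) ℝ) : Matrix (Fin d) (Fin d) ℝ :=
  ((Matrix.posSemidef_conjTranspose_mul_self X).1.eigenvectorUnitary : Matrix (Fin d) (Fin d) ℝ) *
    Matrix.diagonal (fun i => ((Real.sqrt ((Matrix.posSemidef_conjTranspose_mul_self X).1.eigenvalues i) : ℝ) : ℝ)) *
    (star (Matrix.posSemidef_conjTranspose_mul_self X).1.eigenvectorUnitary : Matrix (Fin d) (Fin d) ℝ)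

/-- The tuple `√(XᵀX) = (√(X₁ᵀX₁), …, √(X_LᵀX_L))`. -/
noncomputable def sqrtGram (X : V N R) : ∀ ℓ : Fin L, Matrix (Fin (R ℓ)) (Fin (R ℓ)) ℝ :=
  fun ℓ => gramSqrt (X ℓ)

/-- The second moment: tuple of Gram matrices `XᵀX = (X₁ᵀX₁, …, X_LᵀX_L)`. -/
def gram (X : V N R) : ∀ ℓ : Fin L, Matrix (Fin (R ℓ)) (Fin (R ℓ)) ℝ :=
  fun ℓ => (X ℓ)ᵀ * X ℓ

/-- A set `S ⊆ V` is transverse to the orbits of `H` if whenever `X ∈ S` and `Q·X ∈ S`,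
one has `Q·X = X` or `Q·X = −X`. -/
def Transverse (S : Set (V N R)) : Prop :=
  ∀ X ∈ S, ∀ Q : HGroup N, act Q X ∈ S → act Q X = X ∨ act Q X = -X

attribute [local instance] Matrix.frobeniusSeminormedAddCommGroup

-- frobenius norm in sqrt form
lemma frob_eq_sqrt {n m : ℕ} (A : Matrix (Fin n) (Fin m) ℝ) :
    ‖A‖ = Real.sqrt (∑ i, ∑ j, (A i j) ^ 2) := by
  rw [Matrix.frobenius_norm_def, Real.sqrt_eq_rpow]
  congr 1
  refine Finset.sum_congr rfl fun i _ => Finset.sum_congr rfl fun j _ => ?_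
  rw [Real.rpow_two, Real.norm_eq_abs, sq_abs]

lemma fnorm_eq {m n : Fin L → ℕ} (X : ∀ ℓ : Fin L, Matrix (Fin (m ℓ)) (Fin (n ℓ)) ℝ) :
    fnorm X = Real.sqrt (∑ ℓ, ‖X ℓ‖ ^ 2) := by
  unfold fnorm
  congr 1
  refine Finset.sum_congr rfl fun ℓ _ => ?_
  rw [frob_eq_sqrt, Real.sq_sqrt]
  positivity

lemma fnorm_nonneg {m n : Fin L → ℕ} (X : ∀ ℓ : Fin L, Matrix (Fin (m ℓ)) (Fin (n ℓ)) ℝ) :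
    0 ≤ fnorm X := Real.sqrt_nonneg _

lemma frob_le_fnorm {m n : Fin L → ℕ} (X : ∀ ℓ : Fin L, Matrix (Fin (m ℓ)) (Fin (n ℓ)) ℝ)
    (ℓ : Fin L) : ‖X ℓ‖ ≤ fnorm X := by
  rw [fnorm_eq, ← Real.sqrt_sq (norm_nonneg (X ℓ))]
  exact Real.sqrt_le_sqrt (Finset.single_le_sum (f := fun ℓ => ‖X ℓ‖ ^ 2)
    (fun i _ => by positivity) (Finset.mem_univ ℓ))

lemma fnorm_le_of_forall {m n m' n' : Fin L → ℕ} (C : ℝ) (hC : 0 ≤ C)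
    (A : ∀ ℓ : Fin L, Matrix (Fin (m ℓ)) (Fin (n ℓ)) ℝ)
    (B : ∀ ℓ : Fin L, Matrix (Fin (m' ℓ)) (Fin (n' ℓ)) ℝ)
    (h : ∀ ℓ, ‖A ℓ‖ ≤ C * ‖B ℓ‖) : fnorm A ≤ C * fnorm B := by
  rw [fnorm_eq, fnorm_eq]
  have h1 : (∑ ℓ, ‖A ℓ‖ ^ 2) ≤ ∑ ℓ, C ^ 2 * ‖B ℓ‖ ^ 2 := by
    refine Finset.sum_le_sum fun ℓ _ => ?_
    have := h ℓ
    nlinarith [norm_nonneg (A ℓ), norm_nonneg (B ℓ)]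
  calc Real.sqrt (∑ ℓ, ‖A ℓ‖ ^ 2) ≤ Real.sqrt (∑ ℓ, C ^ 2 * ‖B ℓ‖ ^ 2) := Real.sqrt_le_sqrt h1
    _ = C * Real.sqrt (∑ ℓ, ‖B ℓ‖ ^ 2) := by
        rw [← Finset.mul_sum, Real.sqrt_mul (by positivity), Real.sqrt_sq hC]

lemma fnorm_eq_norm {m n : Fin L → ℕ} (X : ∀ ℓ : Fin L, Matrix (Fin (m ℓ)) (Fin (n ℓ)) ℝ) :
    fnorm X = ‖(WithLp.equiv 2 (∀ ℓ : Fin L, Matrix (Fin (m ℓ)) (Fin (n ℓ)) ℝ)).symm X‖ := by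
  rw [PiLp.norm_eq_of_L2, fnorm_eq]
  simp [PiLp.toLp_apply]

lemma fnorm_add_le {m n : Fin L → ℕ} (A B : ∀ ℓ : Fin L, Matrix (Fin (m ℓ)) (Fin (n ℓ)) ℝ) :
    fnorm (A + B) ≤ fnorm A + fnorm B := by
  rw [fnorm_eq_norm, fnorm_eq_norm, fnorm_eq_norm]
  exact (congrArg norm (WithLp.toLp_add 2 A B)).trans_le (norm_add_le _ _)

lemma sumsq_eq_diag {a b : ℕ} (B : Matrix (Fin a) (Fin b) ℝ) :
    ∑ i, ∑ j, (B i j) ^ 2 = ∑ j, (Bᵀ * B) j j := by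
  rw [Finset.sum_comm]
  simp [Matrix.mul_apply, Matrix.transpose_apply, sq]

lemma orth_transpose_mul {n : ℕ} (Q : Matrix.orthogonalGroup (Fin n) ℝ) :
    (Q : Matrix (Fin n) (Fin n) ℝ)ᵀ * (Q : Matrix (Fin n) (Fin n) ℝ) = 1 := by
  have h := Q.prop.1
  simpa [Matrix.star_eq_conjTranspose, Matrix.conjTranspose_eq_transpose_of_trivial] using h

lemma gram_orth {n d : ℕ} (Q : Matrix.orthogonalGroup (Fin n) ℝ)
    (A : Matrix (Fin n) (Fin d) ℝ) :
    ((Q : Matrix (Fin n) (Fin n) ℝ) * A)ᵀ * ((Q : Matrix (Fin n) (Fin n) ℝ) * A) = Aᵀ * A := by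
  rw [Matrix.transpose_mul, Matrix.mul_assoc, ← Matrix.mul_assoc _ _ A,
    orth_transpose_mul, Matrix.one_mul]

lemma frob_orth {n d : ℕ} (Q : Matrix.orthogonalGroup (Fin n) ℝ)
    (A : Matrix (Fin n) (Fin d) ℝ) :
    ‖(Q : Matrix (Fin n) (Fin n) ℝ) * A‖ = ‖A‖ := by
  rw [frob_eq_sqrt, frob_eq_sqrt, sumsq_eq_diag, sumsq_eq_diag, gram_orth]

lemma frob_gram_sub {n d : ℕ} (A B : Matrix (Fin n) (Fin d) ℝ) :
    ‖Aᵀ * A - Bᵀ * B‖ ≤ (‖A‖ + ‖B‖) * ‖A - B‖ := by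
  have h : Aᵀ * A - Bᵀ * B = Aᵀ * (A - B) + (A - B)ᵀ * B := by
    rw [Matrix.mul_sub, Matrix.transpose_sub, Matrix.sub_mul]
    abel
  rw [h]
  calc ‖Aᵀ * (A - B) + (A - B)ᵀ * B‖ ≤ ‖Aᵀ * (A - B)‖ + ‖(A - B)ᵀ * B‖ := norm_add_le _ _
    _ ≤ ‖Aᵀ‖ * ‖A - B‖ + ‖(A - B)ᵀ‖ * ‖B‖ :=
        add_le_add (Matrix.frobenius_norm_mul _ _) (Matrix.frobenius_norm_mul _ _)
    _ = (‖A‖ + ‖B‖) * ‖A - B‖ := by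
        rw [Matrix.frobenius_norm_transpose, Matrix.frobenius_norm_transpose]; ring

lemma fnorm_gram_sub (X Z : V N R) :
    fnorm (gram X - gram Z) ≤ (fnorm X + fnorm Z) * fnorm (X - Z) := by
  refine fnorm_le_of_forall _ (add_nonneg (fnorm_nonneg X) (fnorm_nonneg Z)) _ _ fun ℓ => ?_
  have h1 : (gram X - gram Z) ℓ = (X ℓ)ᵀ * (X ℓ) - (Z ℓ)ᵀ * (Z ℓ) := rfl
  have h2 : (X - Z) ℓ = X ℓ - Z ℓ := rfl
  rw [h1, h2]
  calc ‖(X ℓ)ᵀ * (X ℓ) - (Z ℓ)ᵀ * (Z ℓ)‖ ≤ (‖X ℓ‖ + ‖Z ℓ‖) * ‖X ℓ - Z ℓ‖ := frob_gram_sub _ _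
    _ ≤ (fnorm X + fnorm Z) * ‖X ℓ - Z ℓ‖ :=
        mul_le_mul_of_nonneg_right (add_le_add (frob_le_fnorm X ℓ) (frob_le_fnorm Z ℓ))
          (norm_nonneg _)

instance : Nonempty (HGroup N) := ⟨fun _ => 1⟩


set_option maxHeartbeats 1000000 in
/-- For `X, Y` in the ball of radius `r` around `X₀`,
`d_Gram(X,Y)² = ‖XᵀX − YᵀY‖ ≤ 2(‖X₀‖ + r)·d_H(X,Y)`. -/
theorem gram_diff_le_dH
    (L : ℕ) (hL : 0 < L) (N R : Fin L → ℕ) (hN : ∀ ℓ, 0 < N ℓ) (hR : ∀ ℓ, 0 < R ℓ)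
    (X₀ : V N R) (r : ℝ) (hr : 0 < r)
    (X Y : V N R) (hX : fnorm (X - X₀) ≤ r) (hY : fnorm (Y - X₀) ≤ r) :
    fnorm (gram X - gram Y) ≤ 2 * (fnorm X₀ + r) * dH X Y := by
  have hC : (0 : ℝ) < 2 * (fnorm X₀ + r) := by
    have := fnorm_nonneg X₀; linarith
  have hXb : fnorm X ≤ fnorm X₀ + r := by
    have h := fnorm_add_le (X - X₀) X₀
    rw [sub_add_cancel] at h
    linarith
  have hYb : fnorm Y ≤ fnorm X₀ + r := by
    have h := fnorm_add_le (Y - X₀) X₀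
    rw [sub_add_cancel] at h
    linarith
  have key : ∀ Q : HGroup N,
      fnorm (gram X - gram Y) ≤ 2 * (fnorm X₀ + r) * fnorm (X - act Q Y) := by
    intro Q
    have hgram : gram (act Q Y) = gram Y := funext fun ℓ => gram_orth (Q ℓ) (Y ℓ)
    have hfn : fnorm (act Q Y) = fnorm Y := by
      rw [fnorm_eq, fnorm_eq]
      congr 1
      exact Finset.sum_congr rfl fun ℓ _ => by rw [show (act Q Y) ℓ = (Q ℓ : Matrix (Fin (N ℓ)) (Fin (N ℓ)) ℝ) * Y ℓ from rfl, frob_orth]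
    calc fnorm (gram X - gram Y) = fnorm (gram X - gram (act Q Y)) := by rw [hgram]
      _ ≤ (fnorm X + fnorm (act Q Y)) * fnorm (X - act Q Y) := fnorm_gram_sub _ _
      _ ≤ 2 * (fnorm X₀ + r) * fnorm (X - act Q Y) := by
          refine mul_le_mul_of_nonneg_right ?_ (fnorm_nonneg _)
          rw [hfn]; linarith
  have h1 : fnorm (gram X - gram Y) / (2 * (fnorm X₀ + r)) ≤ dH X Y :=
    le_ciInf fun Q => (div_le_iff₀ hC).2 (by rw [mul_comm]; exact key Q)
  have h2 := (div_le_iff₀ hC).1 h1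
  linarith [mul_comm (dH X Y) (2 * (fnorm X₀ + r))]


end GPR
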